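/- Let V be a complex Hilbert space, Ω = {z ∈ ℂ : |z| < 1}, and let H, K : Ω → GL(V) be holomorphic maps such that both z ↦ H(z)*H(z) and z ↦ K(z)*K(z) extend to maps Ω̄ → End⁺V continuous in the operator norm. If H(z)*H(z) ≥ K(z)*K(z) for all z ∈ ∂Ω (for the boundary extensions), then H(z)*H(z) ≥ K(z)*K(z) for all z ∈ Ω. -/

import Mathlib

open Complex Metric Filter Set

noncomputable section

variable {V : Type*} [NormedAddCommGroup V] [InnerProductSpace ℂ V] [CompleteSpace V]

/-- Loewner order on operators: `opLE S T` means `S ≤ T`. -/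
def opLE (S T : V →L[ℂ] V) : Prop := ∀ v : V, 0 ≤ (T - S).reApplyInnerSelf v

/-- `End⁺V`: self-adjoint positive invertible operators. -/
def IsPosInv (P : V →L[ℂ] V) : Prop :=
  IsSelfAdjoint P ∧ ∃ ε : ℝ, 0 < ε ∧ ∀ v : V, ε * ‖v‖ ^ 2 ≤ P.reApplyInnerSelf v

lemma re_starMulSelf (A : V →L[ℂ] V) (v : V) :
    RCLike.re (inner ℂ ((star A * A) v) v : ℂ) = ‖A v‖ ^ 2 := by
  rw [ContinuousLinearMap.mul_apply, ContinuousLinearMap.star_eq_adjoint,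
    ContinuousLinearMap.adjoint_inner_left, inner_self_eq_norm_sq]

lemma re_inner_le (A : V →L[ℂ] V) (x : V) :
    RCLike.re (inner ℂ (A x) x : ℂ) ≤ ‖A‖ * ‖x‖ ^ 2 := by
  calc RCLike.re (inner ℂ (A x) x : ℂ) ≤ ‖(inner ℂ (A x) x : ℂ)‖ := RCLike.re_le_norm _
    _ ≤ ‖A x‖ * ‖x‖ := norm_inner_le_norm _ _
    _ ≤ (‖A‖ * ‖x‖) * ‖x‖ := by gcongr; exact A.le_opNorm x
    _ = ‖A‖ * ‖x‖ ^ 2 := by ring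

lemma re_inner_diff_le (A B : V →L[ℂ] V) (x : V) :
    RCLike.re (inner ℂ (A x) x : ℂ) - RCLike.re (inner ℂ (B x) x : ℂ) ≤ ‖A - B‖ * ‖x‖ ^ 2 := by
  have h := re_inner_le (A - B) x
  rw [ContinuousLinearMap.sub_apply, inner_sub_left, map_sub] at h
  linarith

/-- Lemma 3.2(b): a maximum principle for flat factorized metrics:
boundary domination `K*K ≤ H*H` propagates to the interior. -/
theorem factorized_maximum_principle
    (H K PH PK : ℂ → (V →L[ℂ] V))
    (hHdiff : DifferentiableOn ℂ H (ball (0 : ℂ) 1))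
    (hHu : ∀ z ∈ ball (0 : ℂ) 1, IsUnit (H z))
    (hKdiff : DifferentiableOn ℂ K (ball (0 : ℂ) 1))
    (hKu : ∀ z ∈ ball (0 : ℂ) 1, IsUnit (K z))
    (hPHcont : ContinuousOn PH (closedBall (0 : ℂ) 1))
    (hPHpos : ∀ z ∈ closedBall (0 : ℂ) 1, IsPosInv (PH z))
    (hPHeq : ∀ z ∈ ball (0 : ℂ) 1, PH z = star (H z) * H z)
    (hPKcont : ContinuousOn PK (closedBall (0 : ℂ) 1))
    (hPKpos : ∀ z ∈ closedBall (0 : ℂ) 1, IsPosInv (PK z))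
    (hPKeq : ∀ z ∈ ball (0 : ℂ) 1, PK z = star (K z) * K z)
    (hbnd : ∀ z ∈ sphere (0 : ℂ) 1, opLE (PK z) (PH z)) :
    ∀ z ∈ ball (0 : ℂ) 1, opLE (star (K z) * K z) (star (H z) * H z) := by
  classical
  set F : ℂ → (V →L[ℂ] V) := fun z => K z * Ring.inverse (H z) with hF
  have hFdiff : DifferentiableOn ℂ F (ball (0 : ℂ) 1) := fun z hz =>
    (hKdiff z hz).mul ((hHdiff z hz).inverse (hHu z hz))
  have hHinv : ∀ z ∈ ball (0 : ℂ) 1, ∀ u : V, H z (Ring.inverse (H z) u) = u := by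
    intro z hz u
    have h : (H z * Ring.inverse (H z)) u = (1 : V →L[ℂ] V) u := by
      rw [Ring.mul_inverse_cancel _ (hHu z hz)]
    simpa [ContinuousLinearMap.mul_apply] using h
  have hHinv' : ∀ z ∈ ball (0 : ℂ) 1, ∀ v : V, Ring.inverse (H z) (H z v) = v := by
    intro z hz v
    have h : (Ring.inverse (H z) * H z) v = (1 : V →L[ℂ] V) v := by
      rw [Ring.inverse_mul_cancel _ (hHu z hz)]
    simpa [ContinuousLinearMap.mul_apply] using h
  have hFapp : ∀ z ∈ ball (0 : ℂ) 1, ∀ v : V, F z (H z v) = K z v := by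
    intro z hz v
    simp [hF, ContinuousLinearMap.mul_apply, hHinv' z hz v]
  have hKsq : ∀ z ∈ ball (0 : ℂ) 1, ∀ x : V,
      ‖K z x‖ ^ 2 = RCLike.re (inner ℂ (PK z x) x : ℂ) := by
    intro z hz x; rw [hPKeq z hz, re_starMulSelf]
  have hHsq : ∀ z ∈ ball (0 : ℂ) 1, ∀ x : V,
      ‖H z x‖ ^ 2 = RCLike.re (inner ℂ (PH z x) x : ℂ) := by
    intro z hz x; rw [hPHeq z hz, re_starMulSelf]
  -- boundary estimate
  have bd : ∀ ζ ∈ sphere (0 : ℂ) 1, ∀ ε : ℝ, 0 < ε →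
      ∃ U : Set ℂ, IsOpen U ∧ ζ ∈ U ∧ ∀ z ∈ U ∩ ball (0 : ℂ) 1, ‖F z‖ ≤ 1 + ε := by
    intro ζ hζ ε hε
    have hζc : ζ ∈ closedBall (0 : ℂ) 1 := sphere_subset_closedBall hζ
    obtain ⟨-, ε₀, hε₀, hlow⟩ := hPHpos ζ hζc
    set δ := min (ε₀ / 2) (ε * ε₀ / 4) with hδdef
    have hδpos : 0 < δ := lt_min (by linarith) (by positivity)
    obtain ⟨ρ₁, hρ₁, hH1⟩ := (Metric.continuousWithinAt_iff.mp (hPHcont ζ hζc)) δ hδpos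
    obtain ⟨ρ₂, hρ₂, hK1⟩ := (Metric.continuousWithinAt_iff.mp (hPKcont ζ hζc)) δ hδpos
    refine ⟨ball ζ (min ρ₁ ρ₂), isOpen_ball, mem_ball_self (lt_min hρ₁ hρ₂), ?_⟩
    rintro z ⟨hzU, hzb⟩
    have hzc : z ∈ closedBall (0 : ℂ) 1 := ball_subset_closedBall hzb
    have hdH : ‖PH z - PH ζ‖ < δ := by
      rw [← dist_eq_norm]; exact hH1 hzc (lt_of_lt_of_le hzU (min_le_left _ _))
    have hdK : ‖PK z - PK ζ‖ < δ := by
      rw [← dist_eq_norm]; exact hK1 hzc (lt_of_lt_of_le hzU (min_le_right _ _))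
    -- quadratic form estimate
    have hquad : ∀ x : V, RCLike.re (inner ℂ (PK z x) x : ℂ) ≤
        (1 + ε) ^ 2 * RCLike.re (inner ℂ (PH z x) x : ℂ) := by
      intro x
      set n := ‖x‖ ^ 2 with hn
      have hn0 : 0 ≤ n := by positivity
      have h1 : RCLike.re (inner ℂ (PK z x) x : ℂ) - RCLike.re (inner ℂ (PK ζ x) x : ℂ) ≤ δ * n := by
        have := re_inner_diff_le (PK z) (PK ζ) x
        nlinarith [hdK.le]
      have h2 : RCLike.re (inner ℂ (PH ζ x) x : ℂ) - RCLike.re (inner ℂ (PH z x) x : ℂ) ≤ δ * n := by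
        have := re_inner_diff_le (PH ζ) (PH z) x
        have h' : ‖PH ζ - PH z‖ = ‖PH z - PH ζ‖ := norm_sub_rev _ _
        nlinarith [hdH.le]
      have h3 : RCLike.re (inner ℂ (PK ζ x) x : ℂ) ≤ RCLike.re (inner ℂ (PH ζ x) x : ℂ) := by
        have := hbnd ζ hζ x
        rw [ContinuousLinearMap.reApplyInnerSelf_apply, ContinuousLinearMap.sub_apply,
          inner_sub_left, map_sub] at this
        linarith
      have h4 : ε₀ * n ≤ RCLike.re (inner ℂ (PH ζ x) x : ℂ) := by
        have := hlow x
        rwa [ContinuousLinearMap.reApplyInnerSelf_apply] at this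
      have hδ1 : δ ≤ ε₀ / 2 := min_le_left _ _
      have hδ2 : δ ≤ ε * ε₀ / 4 := min_le_right _ _
      have hδn1 : δ * n ≤ ε₀ / 2 * n := mul_le_mul_of_nonneg_right hδ1 hn0
      have hδn2 : δ * n ≤ ε * ε₀ / 4 * n := mul_le_mul_of_nonneg_right hδ2 hn0
      set a := RCLike.re (inner ℂ (PH z x) x : ℂ)
      set b := RCLike.re (inner ℂ (PK z x) x : ℂ)
      have hε₀n : 0 ≤ ε₀ * n := mul_nonneg hε₀.le hn0
      have ha : ε₀ * n ≤ 2 * a := by linarith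
      have ha0 : 0 ≤ a := by linarith
      have hb : b ≤ a + 2 * (δ * n) := by linarith
      have hfin : 2 * (δ * n) ≤ ε * a := by nlinarith [mul_le_mul_of_nonneg_left ha (by positivity : (0:ℝ) ≤ ε / 2)]
      nlinarith [mul_nonneg hε.le ha0, mul_nonneg (mul_nonneg hε.le hε.le) ha0]
    refine ContinuousLinearMap.opNorm_le_bound _ (by linarith) ?_
    intro u
    set x := Ring.inverse (H z) u with hx
    have hHx : H z x = u := hHinv z hzb u
    have hFu : F z u = K z x := by simp [hF, hx, ContinuousLinearMap.mul_apply]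
    have hsq : ‖F z u‖ ^ 2 ≤ ((1 + ε) * ‖u‖) ^ 2 := by
      rw [hFu, hKsq z hzb x]
      calc RCLike.re (inner ℂ (PK z x) x : ℂ) ≤ (1 + ε) ^ 2 * RCLike.re (inner ℂ (PH z x) x : ℂ) :=
            hquad x
        _ = (1 + ε) ^ 2 * ‖H z x‖ ^ 2 := by rw [hHsq z hzb x]
        _ = ((1 + ε) * ‖u‖) ^ 2 := by rw [hHx]; ring
    have hb0 : 0 ≤ (1 + ε) * ‖u‖ := by positivity
    nlinarith [norm_nonneg (F z u), hb0, hsq]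
  -- interior bound via the maximum principle
  have key : ∀ z₀ ∈ ball (0 : ℂ) 1, ‖F z₀‖ ≤ 1 := by
    intro z₀ hz₀
    refine le_of_forall_pos_le_add ?_
    intro ε hε
    choose! U hUopen hUmem hUbd using fun ζ hζ => bd ζ hζ ε hε
    obtain ⟨b', hb'sub, hb'fin, hb'cov⟩ :=
      (isCompact_sphere (0 : ℂ) 1).elim_finite_subcover_image
        (fun ζ hζ => hUopen ζ hζ) (fun ζ hζ => mem_biUnion hζ (hUmem ζ hζ))
    set T := ⋃ ζ ∈ b', U ζ with hT
    have hTopen : IsOpen T := isOpen_biUnion fun ζ hζ => hUopen ζ (hb'sub hζ)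
    obtain ⟨δ₀, hδ₀, hthick⟩ :=
      (isCompact_sphere (0 : ℂ) 1).exists_thickening_subset_open hTopen hb'cov
    set δ := min δ₀ 1 with hδ
    have hδpos : 0 < δ := lt_min hδ₀ one_pos
    have hδle1 : δ ≤ 1 := min_le_right _ _
    have hann : ∀ w : ℂ, 1 - δ < ‖w‖ → ‖w‖ < 1 → ‖F w‖ ≤ 1 + ε := by
      intro w h1 h2
      have hw0 : 0 < ‖w‖ := lt_of_le_of_lt (by linarith) h1
      set y := (‖w‖)⁻¹ • w with hy
      have hys : y ∈ sphere (0 : ℂ) 1 := by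
        rw [mem_sphere_zero_iff_norm, hy, norm_smul, Real.norm_eq_abs,
          abs_of_pos (inv_pos.mpr hw0), inv_mul_cancel₀ hw0.ne']
      have hdist : dist w y < δ₀ := by
        have hcalc : w - y = (1 - (‖w‖)⁻¹) • w := by
          rw [sub_smul, one_smul, hy]
        rw [dist_eq_norm, hcalc, norm_smul, Real.norm_eq_abs]
        have : |1 - (‖w‖)⁻¹| * ‖w‖ = |(1 - (‖w‖)⁻¹) * ‖w‖| := by
          rw [abs_mul, abs_of_pos hw0]
        rw [this]
        have he : (1 - (‖w‖)⁻¹) * ‖w‖ = ‖w‖ - 1 := by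
          rw [sub_mul, one_mul, inv_mul_cancel₀ hw0.ne']
        rw [he, abs_of_neg (by linarith)]
        have : δ ≤ δ₀ := min_le_left _ _
        linarith
      have hwT : w ∈ T := hthick (Metric.mem_thickening_iff.mpr ⟨y, hys, hdist⟩)
      obtain ⟨ζ, hζ, hwU⟩ := mem_iUnion₂.mp hwT
      exact hUbd ζ (hb'sub hζ) w ⟨hwU, mem_ball_zero_iff.mpr h2⟩
    have hz₀n : ‖z₀‖ < 1 := mem_ball_zero_iff.mp hz₀
    obtain ⟨r, hr1, hr2⟩ := exists_between (max_lt hz₀n (by linarith : 1 - δ < 1))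
    have hrpos : 0 < r := lt_of_le_of_lt (le_trans (by linarith) (le_max_right ‖z₀‖ (1 - δ))) hr1
    have hd : DiffContOnCl ℂ F (ball (0 : ℂ) r) := by
      refine DifferentiableOn.diffContOnCl (hFdiff.mono ?_)
      rw [closure_ball (0 : ℂ) hrpos.ne']
      exact closedBall_subset_ball hr2
    have hfr : ∀ w ∈ frontier (ball (0 : ℂ) r), ‖F w‖ ≤ 1 + ε := by
      intro w hw
      rw [frontier_ball (0 : ℂ) hrpos.ne'] at hw
      have hwn : ‖w‖ = r := mem_sphere_zero_iff_norm.mp hw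
      exact hann w (by rw [hwn]; exact lt_of_le_of_lt (le_max_right _ _) hr1)
        (by rw [hwn]; exact hr2)
    exact Complex.norm_le_of_forall_mem_frontier_norm_le isBounded_ball hd hfr
      (subset_closure (mem_ball_zero_iff.mpr (lt_of_le_of_lt (le_max_left _ _) hr1)))
  -- conclusion
  intro z hz v
  have h1 : ‖K z v‖ ≤ ‖H z v‖ := by
    calc ‖K z v‖ = ‖F z (H z v)‖ := by rw [hFapp z hz v]
      _ ≤ ‖F z‖ * ‖H z v‖ := (F z).le_opNorm _
      _ ≤ 1 * ‖H z v‖ := mul_le_mul_of_nonneg_right (key z hz) (norm_nonneg _)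
      _ = ‖H z v‖ := one_mul _
  rw [ContinuousLinearMap.reApplyInnerSelf_apply, ContinuousLinearMap.sub_apply,
    inner_sub_left, map_sub, re_starMulSelf, re_starMulSelf]
  exact sub_nonneg.mpr (pow_le_pow_left₀ (norm_nonneg _) h1 2)
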